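/- arXiv:2402.02673 — 2 statements merged into one kernel-verified Lean document; each statement's English description precedes it below -/
import Mathlib

section
/- A single-stage ω-Thiele rule satisfies Committee Monotonicity if and only if ω(i) − ω(i−1) = ω(1) − ω(0) for all integers i ≥ 1 (i.e., ω is linear). -/
/-- The ω-Thiele score of a committee `S`, given voters identified with their
approval ballots: `Σ_{v ∈ V} ω(|S ∩ A_v|)`. -/
noncomputable def thieleScore {α : Type} [DecidableEq α] (ω : ℕ → ℝ)
    (V : List (Finset α)) (S : Finset α) : ℝ :=
  (V.map fun A => ω (S ∩ A).card).sum

/-- Winning committees of the single-stage ω-Thiele rule on the candidate pool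
`C` with target size `k`: all size-`k` committees maximizing the ω-Thiele score. -/
def thieleWinners {α : Type} [DecidableEq α] (ω : ℕ → ℝ)
    (C : Finset α) (V : List (Finset α)) (k : ℕ) : Set (Finset α) :=
  {S | S ⊆ C ∧ S.card = k ∧
    ∀ T ⊆ C, T.card = k → thieleScore ω V T ≤ thieleScore ω V S}

/-- Committee Monotonicity of the single-stage ω-Thiele rule: for every election
(over any candidate type, ballots drawn from the candidate set) and every `k`,
(i) every size-`k` winning committee extends to a size-`(k+1)` winning committee,
and (ii) every size-`(k+1)` winning committee contains a size-`k` winning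
committee. -/
def ThieleCommitteeMonotone (ω : ℕ → ℝ) : Prop :=
  ∀ (α : Type) [DecidableEq α] (C : Finset α) (V : List (Finset α)),
    (∀ A ∈ V, A ⊆ C) →
    ∀ k : ℕ, 1 ≤ k → k + 1 < C.card →
      (∀ S ∈ thieleWinners ω C V k, ∃ S' ∈ thieleWinners ω C V (k + 1), S ⊂ S') ∧
      (∀ S ∈ thieleWinners ω C V (k + 1), ∃ S' ∈ thieleWinners ω C V k, S' ⊂ S)

lemma thieleScore_append {α : Type} [DecidableEq α] (ω : ℕ → ℝ) (V1 V2 : List (Finset α))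
    (S : Finset α) :
    thieleScore ω (V1 ++ V2) S = thieleScore ω V1 S + thieleScore ω V2 S := by
  simp [thieleScore]

lemma thieleScore_replicate {α : Type} [DecidableEq α] (ω : ℕ → ℝ) (n : ℕ) (A S : Finset α) :
    thieleScore ω (List.replicate n A) S = n * ω ((S ∩ A).card) := by
  simp [thieleScore, List.map_replicate, List.sum_replicate, nsmul_eq_mul]

lemma card_inter_singleton (T : Finset ℕ) (y : ℕ) :
    (T ∩ {y}).card = if y ∈ T then 1 else 0 := by
  by_cases h : y ∈ T
  · have : T ∩ {y} = {y} := by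
      ext a
      simp only [Finset.mem_inter, Finset.mem_singleton]
      constructor
      · tauto
      · rintro rfl; exact ⟨h, rfl⟩
    simp [this, h]
  · have : T ∩ {y} = ∅ := by
      ext a
      simp only [Finset.mem_inter, Finset.mem_singleton, Finset.notMem_empty, iff_false,
        not_and]
      rintro ha rfl; exact h ha
    simp [this, h]

lemma card_inter_insert (T X : Finset ℕ) (y : ℕ) (hy : y ∉ X) :
    (T ∩ insert y X).card = (T ∩ X).card + if y ∈ T then 1 else 0 := by
  have hdisj : Disjoint (T ∩ X) (T ∩ {y}) := by
    rw [Finset.disjoint_left]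
    intro a ha1 ha2
    rw [Finset.mem_inter] at ha1 ha2
    rw [Finset.mem_singleton] at ha2
    exact hy (ha2.2 ▸ ha1.2)
  have : T ∩ insert y X = (T ∩ X) ∪ (T ∩ {y}) := by
    rw [Finset.insert_eq, Finset.union_comm ({y} : Finset ℕ) X, Finset.inter_union_distrib_left]
  rw [this, Finset.card_union_of_disjoint hdisj, card_inter_singleton]

lemma card_inter_bound1 (T X : Finset ℕ) (y : ℕ) (hy : y ∉ X) :
    (T ∩ X).card + (if y ∈ T then 1 else 0) ≤ T.card := by
  rw [← card_inter_insert T X y hy]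
  exact Finset.card_le_card Finset.inter_subset_left

lemma card_inter_bound2 (T X : Finset ℕ) (y1 y2 : ℕ) (h1 : y1 ∉ X) (h2 : y2 ∉ X)
    (h12 : y1 ≠ y2) :
    (T ∩ X).card + (if y1 ∈ T then 1 else 0) + (if y2 ∈ T then 1 else 0) ≤ T.card := by
  have e1 := card_inter_insert T (insert y2 X) y1
    (by simp only [Finset.mem_insert]; push_neg; exact ⟨h12, h1⟩)
  have e2 := card_inter_insert T X y2 h2
  have hle : (T ∩ insert y1 (insert y2 X)).card ≤ T.card :=
    Finset.card_le_card Finset.inter_subset_left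
  omega

lemma convex_contra (ω : ℕ → ℝ) (hmono : Monotone ω) (h0 : ω 0 = 0) (m n : ℕ) (hn : 1 ≤ n)
    (hlow : ∀ s ≤ m + 1, ω s = s * ω 1)
    (hcond : ((n : ℝ) + 1) * ω 1 < n * (ω (m + 2) - ω (m + 1)))
    (hCM : ThieleCommitteeMonotone ω) : False := by
  classical
  have hc0 : (0:ℝ) ≤ ω 1 := by
    have := hmono (by omega : (0:ℕ) ≤ 1)
    linarith
  set X : Finset ℕ := Finset.range (m+2) with hX
  set C : Finset ℕ := Finset.range (m+4) with hC
  set V : List (Finset ℕ) :=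
    List.replicate n X ++ List.replicate (n+1) ({m+2} : Finset ℕ) with hV
  have hscore : ∀ S : Finset ℕ, thieleScore ω V S =
      n * ω ((S ∩ X).card) + (n+1) * ω ((S ∩ ({m+2} : Finset ℕ)).card) := by
    intro S
    rw [hV, thieleScore_append, thieleScore_replicate, thieleScore_replicate]
    push_cast
    ring
  have hmX : (m+2) ∉ X := by simp [hX]
  have hballots : ∀ A ∈ V, A ⊆ C := by
    intro A hA
    rw [hV, List.mem_append, List.mem_replicate, List.mem_replicate] at hA
    rcases hA with ⟨-, rfl⟩ | ⟨-, rfl⟩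
    · rw [hX, hC]; exact Finset.range_subset_range.mpr (by omega)
    · intro x hx
      rw [Finset.mem_singleton] at hx
      subst hx
      simp [hC, Finset.mem_range]
  set S0 : Finset ℕ := insert (m+2) (Finset.range m) with hS0
  have hmr : (m+2) ∉ Finset.range m := by simp
  have hS0card : S0.card = m + 1 := by
    rw [hS0, Finset.card_insert_of_notMem hmr, Finset.card_range]
  have hS0sub : S0 ⊆ C := by
    intro x hx
    rw [hS0, Finset.mem_insert, Finset.mem_range] at hx
    rw [hC, Finset.mem_range]
    omega
  have hS0X : (S0 ∩ X).card = m := by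
    have : S0 ∩ X = Finset.range m := by
      ext a
      rw [hS0, hX]
      simp only [Finset.mem_inter, Finset.mem_insert, Finset.mem_range]
      omega
    rw [this, Finset.card_range]
  have hS0y : (S0 ∩ ({m+2} : Finset ℕ)).card = 1 := by
    rw [card_inter_singleton, if_pos (by rw [hS0]; exact Finset.mem_insert_self _ _)]
  have hS0score : thieleScore ω V S0 = n * (m * ω 1) + (n+1) * ω 1 := by
    rw [hscore, hS0X, hS0y, hlow m (by omega), hlow 1 (by omega)]
    try push_cast
    try ring
  have hS0win : S0 ∈ thieleWinners ω C V (m+1) := by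
    refine ⟨hS0sub, hS0card, ?_⟩
    intro T hTC hTcard
    have hkey := card_inter_bound1 T X (m+2) hmX
    rw [hTcard] at hkey
    have hTX : (T ∩ X).card ≤ m + 1 := by omega
    rw [hscore, hS0score, hlow _ hTX, card_inter_singleton]
    have hcast : ((T ∩ X).card : ℝ) ≤ ((m:ℝ) + 1) := by exact_mod_cast hTX
    by_cases hy : (m+2) ∈ T
    · rw [if_pos hy] at hkey ⊢
      rw [hlow 1 (by omega)]
      have hsm : ((T ∩ X).card : ℝ) ≤ (m : ℝ) := by
        have : (T ∩ X).card ≤ m := by omega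
        exact_mod_cast this
      push_cast
      linarith [mul_le_mul_of_nonneg_left (mul_le_mul_of_nonneg_right hsm hc0)
        (by positivity : (0:ℝ) ≤ (n:ℝ))]
    · rw [if_neg hy, h0]
      push_cast
      linarith [mul_le_mul_of_nonneg_left (mul_le_mul_of_nonneg_right hcast hc0)
        (by positivity : (0:ℝ) ≤ (n:ℝ)), hc0]
  have hCcard : C.card = m + 4 := by rw [hC, Finset.card_range]
  obtain ⟨S', hS'win, hSS'⟩ :=
    (hCM ℕ C V hballots (m+1) (by omega) (by rw [hCcard]; omega)).1 S0 hS0win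
  obtain ⟨hS'C, hS'card, hS'max⟩ := hS'win
  have hyS' : (m+2) ∈ S' := hSS'.subset (by rw [hS0]; exact Finset.mem_insert_self _ _)
  have hXsub : X ⊆ C := by rw [hX, hC]; exact Finset.range_subset_range.mpr (by omega)
  have hXcard : X.card = m + 2 := by rw [hX]; exact Finset.card_range _
  have hmax := hS'max X hXsub hXcard
  have hXX : (X ∩ X).card = m + 2 := by rw [Finset.inter_self, hXcard]
  have hXy : (X ∩ ({m+2} : Finset ℕ)).card = 0 := by
    rw [card_inter_singleton, if_neg hmX]
  have hscoreX : thieleScore ω V X = n * ω (m+2) := by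
    rw [hscore, hXX, hXy, h0]
    ring
  have hS'X : (S' ∩ X).card ≤ m + 1 := by
    have hsub : S' ∩ X ⊆ S'.erase (m+2) := by
      intro a ha
      rw [Finset.mem_inter] at ha
      refine Finset.mem_erase.mpr ⟨?_, ha.1⟩
      intro h
      rw [h] at ha
      exact hmX ha.2
    calc (S' ∩ X).card ≤ (S'.erase (m+2)).card := Finset.card_le_card hsub
      _ = m + 1 := by rw [Finset.card_erase_of_mem hyS', hS'card]; omega

  have hscoreS' : thieleScore ω V S' ≤ (n:ℝ) * (((m:ℝ)+1) * ω 1) + ((n:ℝ)+1) * ω 1 := by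
    rw [hscore, hlow _ hS'X, card_inter_singleton, if_pos hyS', hlow 1 (by omega)]
    have hcast : ((S' ∩ X).card : ℝ) ≤ ((m:ℝ) + 1) := by exact_mod_cast hS'X
    push_cast
    linarith [mul_le_mul_of_nonneg_left (mul_le_mul_of_nonneg_right hcast hc0)
      (by positivity : (0:ℝ) ≤ (n:ℝ))]
  have hω2 : ω (m+2) = ((m:ℝ)+1) * ω 1 + (ω (m+2) - ω (m+1)) := by
    rw [hlow (m+1) (le_refl _)]
    push_cast
    ring
  rw [hscoreX, hω2] at hmax
  linarith [hmax, hscoreS', hcond]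
set_option maxHeartbeats 1600000 in
lemma concave_contra (ω : ℕ → ℝ) (hmono : Monotone ω) (h0 : ω 0 = 0) (m n : ℕ) (hn : 1 ≤ n)
    (hlow : ∀ s ≤ m + 1, ω s = s * ω 1)
    (hcond : ((n : ℝ) + 1) * (ω (m + 2) - ω (m + 1)) < n * ω 1)
    (hCM : ThieleCommitteeMonotone ω) : False := by
  classical
  have hc0 : (0:ℝ) ≤ ω 1 := by
    have := hmono (by omega : (0:ℕ) ≤ 1)
    linarith
  have hd0 : (0:ℝ) ≤ ω (m+2) - ω (m+1) := by
    have := hmono (by omega : m+1 ≤ m+2)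
    linarith
  have hn1 : (1:ℝ) ≤ (n:ℝ) := by exact_mod_cast hn
  have hcpos : (0:ℝ) < ω 1 := by nlinarith
  set X : Finset ℕ := Finset.range (m+1) with hX
  set C : Finset ℕ := Finset.range (m+4) with hC
  have hy1X : (m+1) ∉ X := by simp [hX]
  have hy2X : (m+2) ∉ X := by simp [hX]
  have hy12 : (m+2) ∉ insert (m+1) X := by
    rw [Finset.mem_insert]
    push_neg
    exact ⟨by omega, hy2X⟩
  have hy21 : (m+1) ∉ insert (m+2) X := by
    rw [Finset.mem_insert]
    push_neg
    exact ⟨by omega, hy1X⟩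
  have hy13 : (m+1) ∉ insert (m+3) X := by
    rw [Finset.mem_insert]
    push_neg
    exact ⟨by omega, hy1X⟩
  have hy23 : (m+2) ∉ insert (m+3) X := by
    rw [Finset.mem_insert]
    push_neg
    exact ⟨by omega, hy2X⟩
  set V : List (Finset ℕ) :=
    List.replicate (n+1) (insert (m+1) X) ++ (List.replicate (n+1) (insert (m+2) X) ++
      (List.replicate n ({m+1} : Finset ℕ) ++ List.replicate n ({m+2} : Finset ℕ))) with hV
  have hscore : ∀ S : Finset ℕ, thieleScore ω V S =
      ((n:ℝ)+1) * ω ((S ∩ insert (m+1) X).card) + ((n:ℝ)+1) * ω ((S ∩ insert (m+2) X).card)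
      + n * ω ((S ∩ ({m+1} : Finset ℕ)).card) + n * ω ((S ∩ ({m+2} : Finset ℕ)).card) := by
    intro S
    rw [hV, thieleScore_append, thieleScore_append, thieleScore_append,
      thieleScore_replicate, thieleScore_replicate, thieleScore_replicate,
      thieleScore_replicate]
    push_cast
    ring
  have hballots : ∀ A ∈ V, A ⊆ C := by
    intro A hA
    rw [hV, List.mem_append, List.mem_append, List.mem_append, List.mem_replicate,
      List.mem_replicate, List.mem_replicate, List.mem_replicate] at hA
    have hXC : X ⊆ C := by rw [hX, hC]; exact Finset.range_subset_range.mpr (by omega)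
    rcases hA with ⟨-, rfl⟩ | (⟨-, rfl⟩ | (⟨-, rfl⟩ | ⟨-, rfl⟩))
    · exact Finset.insert_subset (by rw [hC]; simp [Finset.mem_range]) hXC
    · exact Finset.insert_subset (by rw [hC]; simp [Finset.mem_range]) hXC
    · intro x hx; rw [Finset.mem_singleton] at hx; subst hx
      rw [hC]; simp [Finset.mem_range]
    · intro x hx; rw [Finset.mem_singleton] at hx; subst hx
      rw [hC]; simp [Finset.mem_range]
  have hXcard : X.card = m + 1 := by rw [hX]; exact Finset.card_range _
  have hXsub : X ⊆ C := by rw [hX, hC]; exact Finset.range_subset_range.mpr (by omega)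
  have cX1 : (X ∩ insert (m+1) X).card = m + 1 := by
    rw [Finset.inter_eq_left.mpr (Finset.subset_insert _ _), hXcard]
  have cX2 : (X ∩ insert (m+2) X).card = m + 1 := by
    rw [Finset.inter_eq_left.mpr (Finset.subset_insert _ _), hXcard]
  have cX3 : (X ∩ ({m+1} : Finset ℕ)).card = 0 := by
    rw [card_inter_singleton, if_neg hy1X]
  have cX4 : (X ∩ ({m+2} : Finset ℕ)).card = 0 := by
    rw [card_inter_singleton, if_neg hy2X]
  have hscoreX : thieleScore ω V X =
      ((n:ℝ)+1) * (((m:ℝ)+1) * ω 1) + ((n:ℝ)+1) * (((m:ℝ)+1) * ω 1) := by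
    rw [hscore, cX1, cX2, cX3, cX4, hlow (m+1) le_rfl, h0]
    push_cast
    ring
  -- X is a winner at size m+1
  have hXwin : X ∈ thieleWinners ω C V (m+1) := by
    refine ⟨hXsub, hXcard, ?_⟩
    intro T hTC hTcard
    have A1 : (T ∩ insert (m+1) X).card + (T ∩ ({m+2} : Finset ℕ)).card ≤ m + 1 := by
      rw [card_inter_singleton]
      have h := card_inter_bound1 T (insert (m+1) X) (m+2) hy12
      rw [hTcard] at h
      exact h
    have A2 : (T ∩ insert (m+2) X).card + (T ∩ ({m+1} : Finset ℕ)).card ≤ m + 1 := by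
      rw [card_inter_singleton]
      have h := card_inter_bound1 T (insert (m+2) X) (m+1) hy21
      rw [hTcard] at h
      exact h
    have he1 : (T ∩ ({m+1} : Finset ℕ)).card ≤ 1 :=
      le_trans (Finset.card_le_card Finset.inter_subset_right) (by simp)
    have he2 : (T ∩ ({m+2} : Finset ℕ)).card ≤ 1 :=
      le_trans (Finset.card_le_card Finset.inter_subset_right) (by simp)
    rw [hscore, hscoreX, hlow ((T ∩ insert (m+1) X).card) (by omega),
      hlow ((T ∩ insert (m+2) X).card) (by omega),
      hlow ((T ∩ ({m+1} : Finset ℕ)).card) (by omega),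
      hlow ((T ∩ ({m+2} : Finset ℕ)).card) (by omega)]
    have a1 : ((T ∩ insert (m+1) X).card : ℝ) + ((T ∩ ({m+2} : Finset ℕ)).card : ℝ)
        ≤ (m:ℝ) + 1 := by exact_mod_cast A1
    have a2 : ((T ∩ insert (m+2) X).card : ℝ) + ((T ∩ ({m+1} : Finset ℕ)).card : ℝ)
        ≤ (m:ℝ) + 1 := by exact_mod_cast A2
    have H1 : ((n:ℝ)+1) * ((((T ∩ insert (m+1) X).card : ℝ)
        + ((T ∩ ({m+2} : Finset ℕ)).card : ℝ)) * ω 1)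
        ≤ ((n:ℝ)+1) * (((m:ℝ)+1) * ω 1) :=
      mul_le_mul_of_nonneg_left (mul_le_mul_of_nonneg_right a1 hc0)
        (by positivity : (0:ℝ) ≤ (n:ℝ)+1)
    have H2 : ((n:ℝ)+1) * ((((T ∩ insert (m+2) X).card : ℝ)
        + ((T ∩ ({m+1} : Finset ℕ)).card : ℝ)) * ω 1)
        ≤ ((n:ℝ)+1) * (((m:ℝ)+1) * ω 1) :=
      mul_le_mul_of_nonneg_left (mul_le_mul_of_nonneg_right a2 hc0)
        (by positivity : (0:ℝ) ≤ (n:ℝ)+1)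
    have H3 : (0:ℝ) ≤ ((T ∩ ({m+1} : Finset ℕ)).card : ℝ) * ω 1 := by positivity
    have H4 : (0:ℝ) ≤ ((T ∩ ({m+2} : Finset ℕ)).card : ℝ) * ω 1 := by positivity
    nlinarith [H1, H2, H3, H4]
  have hCcard : C.card = m + 4 := by rw [hC, Finset.card_range]
  obtain ⟨S', hS'win, hSS'⟩ :=
    (hCM ℕ C V hballots (m+1) (by omega) (by rw [hCcard]; omega)).1 X hXwin
  obtain ⟨hS'C, hS'card, hS'max⟩ := hS'win
  obtain ⟨u, huS', huX⟩ := Finset.exists_of_ssubset hSS'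
  have hS'eq : S' = insert u X := by
    have hsub2 : insert u X ⊆ S' := Finset.insert_subset huS' hSS'.subset
    exact (Finset.eq_of_subset_of_card_le hsub2
      (by rw [hS'card, Finset.card_insert_of_notMem huX, hXcard])).symm
  have hu3 : u = m+1 ∨ u = m+2 ∨ u = m+3 := by
    have h1 : u ∈ C := hS'C huS'
    rw [hC, Finset.mem_range] at h1
    rw [hX, Finset.mem_range] at huX
    omega
  -- the competitor W
  have h0X : 0 ∈ X := by rw [hX]; simp
  set W : Finset ℕ := insert (m+2) (insert (m+1) (X.erase 0)) with hW
  have hWsub : W ⊆ C := by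
    intro a ha
    rw [hW, Finset.mem_insert, Finset.mem_insert, Finset.mem_erase, hX,
      Finset.mem_range] at ha
    rw [hC, Finset.mem_range]
    omega
  have hne1 : (m+1) ∉ X.erase 0 := fun h => hy1X (Finset.mem_of_mem_erase h)
  have hne2' : (m+2) ∉ X.erase 0 := fun h => hy2X (Finset.mem_of_mem_erase h)
  have hne2 : (m+2) ∉ insert (m+1) (X.erase 0) := by
    rw [Finset.mem_insert]
    push_neg
    exact ⟨by omega, hne2'⟩
  have hWcard : W.card = m + 2 := by
    rw [hW, Finset.card_insert_of_notMem hne2, Finset.card_insert_of_notMem hne1,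
      Finset.card_erase_of_mem h0X, hXcard]
    omega
  have cW1 : (W ∩ insert (m+1) X).card = m + 1 := by
    have heq : W ∩ insert (m+1) X = insert (m+1) (X.erase 0) := by
      ext a
      rw [hW, hX]
      simp only [Finset.mem_inter, Finset.mem_insert, Finset.mem_erase, Finset.mem_range]
      omega
    rw [heq, Finset.card_insert_of_notMem hne1, Finset.card_erase_of_mem h0X, hXcard]
    omega
  have cW2 : (W ∩ insert (m+2) X).card = m + 1 := by
    have heq : W ∩ insert (m+2) X = insert (m+2) (X.erase 0) := by
      ext a
      rw [hW, hX]
      simp only [Finset.mem_inter, Finset.mem_insert, Finset.mem_erase, Finset.mem_range]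
      omega
    rw [heq, Finset.card_insert_of_notMem hne2', Finset.card_erase_of_mem h0X, hXcard]
    omega
  have cW3 : (W ∩ ({m+1} : Finset ℕ)).card = 1 := by
    rw [card_inter_singleton, if_pos (by rw [hW]; simp)]
  have cW4 : (W ∩ ({m+2} : Finset ℕ)).card = 1 := by
    rw [card_inter_singleton, if_pos (by rw [hW]; simp)]
  have hscoreW : thieleScore ω V W =
      ((n:ℝ)+1) * (((m:ℝ)+1) * ω 1) + ((n:ℝ)+1) * (((m:ℝ)+1) * ω 1)
        + (n:ℝ) * ω 1 + (n:ℝ) * ω 1 := by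
    rw [hscore, cW1, cW2, cW3, cW4, hlow (m+1) le_rfl]
    push_cast
    ring
  have hWS' := hS'max W hWsub hWcard
  rw [hscoreW, hS'eq] at hWS'
  have hω2 : ω (m+2) = ((m:ℝ)+1) * ω 1 + (ω (m+2) - ω (m+1)) := by
    rw [hlow (m+1) le_rfl]
    push_cast
    ring
  rcases hu3 with h | h | h <;> subst h
  · -- u = m+1
    have d1 : (insert (m+1) X ∩ insert (m+1) X).card = m + 2 := by
      rw [Finset.inter_self, Finset.card_insert_of_notMem hy1X, hXcard]
    have d2 : (insert (m+1) X ∩ insert (m+2) X).card = m + 1 := by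
      have heq : insert (m+1) X ∩ insert (m+2) X = X := by
        ext a
        rw [hX]
        simp only [Finset.mem_inter, Finset.mem_insert, Finset.mem_range]
        omega
      rw [heq, hXcard]
    have d3 : (insert (m+1) X ∩ ({m+1} : Finset ℕ)).card = 1 := by
      rw [card_inter_singleton, if_pos (Finset.mem_insert_self _ _)]
    have d4 : (insert (m+1) X ∩ ({m+2} : Finset ℕ)).card = 0 := by
      rw [card_inter_singleton, if_neg hy12]
    rw [hscore, d1, d2, d3, d4, hlow (m+1) le_rfl, h0, hω2] at hWS'
    push_cast at hWS'
    linarith [hWS', hcond]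
  · -- u = m+2
    have d1 : (insert (m+2) X ∩ insert (m+1) X).card = m + 1 := by
      have heq : insert (m+2) X ∩ insert (m+1) X = X := by
        ext a
        rw [hX]
        simp only [Finset.mem_inter, Finset.mem_insert, Finset.mem_range]
        omega
      rw [heq, hXcard]
    have d2 : (insert (m+2) X ∩ insert (m+2) X).card = m + 2 := by
      rw [Finset.inter_self, Finset.card_insert_of_notMem hy2X, hXcard]
    have d3 : (insert (m+2) X ∩ ({m+1} : Finset ℕ)).card = 0 := by
      rw [card_inter_singleton, if_neg hy21]
    have d4 : (insert (m+2) X ∩ ({m+2} : Finset ℕ)).card = 1 := by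
      rw [card_inter_singleton, if_pos (Finset.mem_insert_self _ _)]
    rw [hscore, d1, d2, d3, d4, hlow (m+1) le_rfl, h0, hω2] at hWS'
    push_cast at hWS'
    linarith [hWS', hcond]
  · -- u = m+3
    have d1 : (insert (m+3) X ∩ insert (m+1) X).card = m + 1 := by
      have heq : insert (m+3) X ∩ insert (m+1) X = X := by
        ext a
        rw [hX]
        simp only [Finset.mem_inter, Finset.mem_insert, Finset.mem_range]
        omega
      rw [heq, hXcard]
    have d2 : (insert (m+3) X ∩ insert (m+2) X).card = m + 1 := by
      have heq : insert (m+3) X ∩ insert (m+2) X = X := by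
        ext a
        rw [hX]
        simp only [Finset.mem_inter, Finset.mem_insert, Finset.mem_range]
        omega
      rw [heq, hXcard]
    have d3 : (insert (m+3) X ∩ ({m+1} : Finset ℕ)).card = 0 := by
      rw [card_inter_singleton, if_neg hy13]
    have d4 : (insert (m+3) X ∩ ({m+2} : Finset ℕ)).card = 0 := by
      rw [card_inter_singleton, if_neg hy23]
    rw [hscore, d1, d2, d3, d4, hlow (m+1) le_rfl, h0] at hWS'
    push_cast at hWS'
    nlinarith [hWS', hcpos, hn1]


lemma thieleScore_additive {α : Type} [DecidableEq α] (ω : ℕ → ℝ) (hω : ∀ n, ω n = n * ω 1)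
    (V : List (Finset α)) (S : Finset α) :
    thieleScore ω V S = ∑ x ∈ S, (ω 1 * (V.countP (fun A => decide (x ∈ A)) : ℝ)) := by
  induction V with
  | nil => simp [thieleScore]
  | cons A V ih =>
    have h1 : thieleScore ω (A :: V) S = ω ((S ∩ A).card) + thieleScore ω V S := by
      simp [thieleScore]
    have h2 : ((S ∩ A).card : ℝ) = ∑ x ∈ S, if x ∈ A then (1:ℝ) else 0 := by
      rw [Finset.sum_boole, Finset.filter_mem_eq_inter]
    rw [h1, ih, hω ((S ∩ A).card)]
    rw [h2, Finset.sum_mul, ← Finset.sum_add_distrib]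
    apply Finset.sum_congr rfl
    intro x hx
    simp only [List.countP_cons]
    by_cases h : x ∈ A <;> simp [h] <;> ring

/-- A single-stage ω-Thiele rule (ω nondecreasing with
`ω(0) = 0`) satisfies Committee Monotonicity if and only if
`ω(i) − ω(i−1) = ω(1) − ω(0)` for all integers `i ≥ 1`, i.e. ω is linear. -/
theorem thiele_committee_monotone_iff_linear (ω : ℕ → ℝ)
    (hmono : Monotone ω) (h0 : ω 0 = 0) :
    ThieleCommitteeMonotone ω ↔ ∀ i : ℕ, 1 ≤ i → ω i - ω (i - 1) = ω 1 - ω 0 := by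
  constructor
  · -- forward direction
    intro hCM
    by_contra hno
    push_neg at hno
    classical
    set j := Nat.find hno with hjdef
    obtain ⟨hj1, hj2⟩ := Nat.find_spec hno
    rw [← hjdef] at hj1 hj2
    have hjne : j ≠ 1 := by
      intro h
      rw [h] at hj2
      simp at hj2
    obtain ⟨m, hm⟩ : ∃ m, j = m + 2 := ⟨j - 2, by omega⟩
    have hlow : ∀ s, s ≤ m + 1 → ω s = s * ω 1 := by
      intro s
      induction s with
      | zero => intro _; simp [h0]
      | succ t ih =>
        intro hst
        have hmin := Nat.find_min hno (show t + 1 < j by omega)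
        push_neg at hmin
        have heq := hmin (by omega)
        simp only [Nat.add_sub_cancel, h0, sub_zero] at heq
        have ht := ih (by omega)
        push_cast
        linarith
    have hne : ω (m+2) - ω (m+1) ≠ ω 1 := by
      have h1 : ω j - ω (j-1) ≠ ω 1 - ω 0 := hj2
      rw [hm] at h1
      simpa [h0] using h1
    rcases hne.lt_or_gt with hlt | hgt
    · -- concave case
      have hpos : (0:ℝ) < ω 1 - (ω (m+2) - ω (m+1)) := by linarith
      obtain ⟨n0, hn0⟩ :=
        exists_nat_gt ((ω (m+2) - ω (m+1)) / (ω 1 - (ω (m+2) - ω (m+1))))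
      have hkey : (ω (m+2) - ω (m+1)) < ((n0:ℝ)+1) * (ω 1 - (ω (m+2) - ω (m+1))) :=
        (div_lt_iff₀ hpos).mp (by linarith)
      exact concave_contra ω hmono h0 m (n0+1) (by omega) hlow
        (by push_cast; linarith) hCM
    · -- convex case
      have hpos : (0:ℝ) < (ω (m+2) - ω (m+1)) - ω 1 := by linarith
      obtain ⟨n0, hn0⟩ :=
        exists_nat_gt (ω 1 / ((ω (m+2) - ω (m+1)) - ω 1))
      have hkey : ω 1 < ((n0:ℝ)+1) * ((ω (m+2) - ω (m+1)) - ω 1) :=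
        (div_lt_iff₀ hpos).mp (by linarith)
      exact convex_contra ω hmono h0 m (n0+1) (by omega) hlow
        (by push_cast; linarith) hCM
  · -- backward direction
    intro hlin
    have hω : ∀ n, ω n = n * ω 1 := by
      intro n
      induction n with
      | zero => simpa using h0
      | succ t ih =>
        have h := hlin (t + 1) (by omega)
        simp only [Nat.add_sub_cancel, h0, sub_zero] at h
        push_cast
        linarith
    intro α _ C V hV k hk hkC
    set w : α → ℝ := fun x => ω 1 * (V.countP (fun A => decide (x ∈ A)) : ℝ) with hw
    have hscore : ∀ S : Finset α, thieleScore ω V S = ∑ x ∈ S, w x := fun S =>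
      thieleScore_additive ω hω V S
    constructor
    · rintro S ⟨hSC, hScard, hSmax⟩
      have hne : (C \ S).Nonempty := by
        rw [← Finset.card_pos, Finset.card_sdiff_of_subset hSC]
        omega
      obtain ⟨x, hxmem, hxmax⟩ := Finset.exists_max_image (C \ S) w hne
      obtain ⟨hxC, hxS⟩ := Finset.mem_sdiff.mp hxmem
      refine ⟨insert x S, ⟨Finset.insert_subset hxC hSC,
        by rw [Finset.card_insert_of_notMem hxS, hScard], ?_⟩, Finset.ssubset_insert hxS⟩
      intro T hTC hTcard
      have hnsub : ¬ T ⊆ S := fun h => by have := Finset.card_le_card h; omega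
      obtain ⟨y, hyT, hyS⟩ := Finset.not_subset.mp hnsub
      have h1 : thieleScore ω V (T.erase y) ≤ thieleScore ω V S :=
        hSmax _ ((Finset.erase_subset _ _).trans hTC)
          (by rw [Finset.card_erase_of_mem hyT, hTcard]; omega)
      have h2 : w y ≤ w x := hxmax y (Finset.mem_sdiff.mpr ⟨hTC hyT, hyS⟩)
      have e1 : thieleScore ω V T = thieleScore ω V (T.erase y) + w y := by
        rw [hscore, hscore]
        exact (Finset.sum_erase_add T w hyT).symm
      have e2 : thieleScore ω V (insert x S) = thieleScore ω V S + w x := by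
        rw [hscore, hscore, Finset.sum_insert hxS]
        ring
      rw [e1, e2]
      linarith
    · rintro S ⟨hSC, hScard, hSmax⟩
      have hne : S.Nonempty := by rw [← Finset.card_pos]; omega
      obtain ⟨x, hxS, hxmin⟩ := Finset.exists_min_image S w hne
      refine ⟨S.erase x, ⟨(Finset.erase_subset _ _).trans hSC,
        by rw [Finset.card_erase_of_mem hxS, hScard]; omega, ?_⟩, Finset.erase_ssubset hxS⟩
      intro T hTC hTcard
      have hnsub : ¬ S ⊆ T := fun h => by have := Finset.card_le_card h; omega
      obtain ⟨y, hyS, hyT⟩ := Finset.not_subset.mp hnsub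
      have h1 : thieleScore ω V (insert y T) ≤ thieleScore ω V S :=
        hSmax _ (Finset.insert_subset (hSC hyS) hTC)
          (by rw [Finset.card_insert_of_notMem hyT, hTcard])
      have h2 : w x ≤ w y := hxmin y hyS
      have e1 : thieleScore ω V (insert y T) = thieleScore ω V T + w y := by
        rw [hscore, hscore, Finset.sum_insert hyT]
        ring
      have e2 : thieleScore ω V S = thieleScore ω V (S.erase x) + w x := by
        rw [hscore, hscore]
        exact (Finset.sum_erase_add S w hxS).symm
      rw [e1] at h1
      rw [e2] at h1
      linarith
end

section
/- The single-stage Proportional Approval Voting rule (the ω-Thiele rule with ω(x) = Σ_{j=1}^x 1/j) does not satisfy Committee Monotonicity: there exist an election E = (C,V) with approval ballots and a size k such that either some committee in PAV(E,k) extends to no committee in PAV(E,k+1), or some committee in PAV(E,k+1) contains no committee in PAV(E,k). -/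
noncomputable def pav (x : ℕ) : ℝ := ∑ j ∈ Finset.range x, (1 : ℝ) / (j + 1)

lemma pav0 : pav 0 = 0 := by simp [pav]
lemma pav1 : pav 1 = 1 := by norm_num [pav, Finset.sum_range_succ]
lemma pav2 : pav 2 = 3/2 := by norm_num [pav, Finset.sum_range_succ]

def Vex : List (Finset ℕ) := [{0}, {1}, {0,2}, {1,2}]

lemma scoreVex (T : Finset ℕ) :
    thieleScore pav Vex T =
      pav (T ∩ {0}).card + pav (T ∩ {1}).card + pav (T ∩ ({0,2} : Finset ℕ)).card
        + pav (T ∩ ({1,2} : Finset ℕ)).card := by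
  simp [thieleScore, Vex]; ring

/-- The single-stage Proportional Approval Voting rule does not
satisfy Committee Monotonicity: there exist an election `E = (C,V)` with
approval ballots and a size `k` such that either some committee in `PAV(E,k)`
extends to no committee in `PAV(E,k+1)`, or some committee in `PAV(E,k+1)`
contains no committee in `PAV(E,k)`. -/
theorem pav_not_committee_monotone :
    ∃ (C : Finset ℕ) (V : List (Finset ℕ)) (k : ℕ),
      (∀ A ∈ V, A ⊆ C) ∧ 1 ≤ k ∧ k + 1 < C.card ∧
      ((∃ S ∈ thieleWinners pav C V k,
          ∀ S' ∈ thieleWinners pav C V (k + 1), ¬ S ⊂ S') ∨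
       (∃ S ∈ thieleWinners pav C V (k + 1),
          ∀ S' ∈ thieleWinners pav C V k, ¬ S' ⊂ S)) := by
  refine ⟨{0,1,2}, Vex, 1, ?_, le_refl 1, by decide, Or.inl ⟨{2}, ⟨by decide, by decide, ?_⟩, ?_⟩⟩
  · intro A hA; fin_cases hA <;> decide
  · -- all size-1 subsets score ≤ score of {2}
    intro T hT hcard
    have hmem : T ∈ ({0,1,2} : Finset ℕ).powersetCard 1 :=
      Finset.mem_powersetCard.mpr ⟨hT, hcard⟩
    have hset : ({0,1,2} : Finset ℕ).powersetCard 1 = {{0},{1},{2}} := by decide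
    rw [hset] at hmem
    fin_cases hmem <;>
      · simp only [scoreVex]
        norm_num [pav0, pav1, pav2]
  · intro S' hS' hsub
    obtain ⟨hC, hcard, hmax⟩ := hS'
    have hmem : S' ∈ ({0,1,2} : Finset ℕ).powersetCard 2 :=
      Finset.mem_powersetCard.mpr ⟨hC, hcard⟩
    have hset : ({0,1,2} : Finset ℕ).powersetCard 2 = {{0,1},{0,2},{1,2}} := by decide
    rw [hset] at hmem
    have h01 := hmax {0,1} (by decide) (by decide)
    fin_cases hmem
    · exact absurd hsub (by decide)
    · simp only [scoreVex] at h01; norm_num [pav0, pav1, pav2] at h01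
    · simp only [scoreVex] at h01; norm_num [pav0, pav1, pav2] at h01
end
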